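/- Let G be a topological group. For each positive integer n, let t_n denote the number of continuous homomorphisms from G to the symmetric group S_n (with the discrete topology), set t_0 = 1, and let M_n denote the number of open subgroups of G of index n; assume all these sets are finite. Then for every positive integer n, t_n = (n−1)! · Σ_{k=1}^{n} t_{n−k} · M_k / (n−k)!. -/

import Mathlib

/-- The number of continuous homomorphisms `G → S_n`, where the symmetric group `S_n`
carries the discrete topology. -/
noncomputable def contHomCount (G : Type*) [Group G] [TopologicalSpace G] (n : ℕ) : ℕ :=
  Nat.card {φ : G →* Equiv.Perm (Fin n) // @Continuous G (Equiv.Perm (Fin n)) _ ⊥ ⇑φ}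

/-- The number of open subgroups of `G` of index `n`. -/
noncomputable def openSubgroupCount (G : Type*) [Group G] [TopologicalSpace G] (n : ℕ) : ℕ :=
  Nat.card {H : Subgroup G // IsOpen (H : Set G) ∧ H.index = n}

open Equiv Function Set
namespace Wohlfahrt

variable {G : Type*} [Group G] [TopologicalSpace G]

def CHom (G : Type*) [Group G] [TopologicalSpace G] (X : Type*) : Type _ :=
  {φ : G →* Equiv.Perm X // @Continuous G (Equiv.Perm X) _ ⊥ ⇑φ}

lemma isOpen_preimage_bot {K : Type*} {f : G → K}
    (h : @Continuous G K _ ⊥ f) (S : Set K) : IsOpen (f ⁻¹' S) := by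
  letI : TopologicalSpace K := ⊥
  haveI : DiscreteTopology K := ⟨rfl⟩
  exact h.isOpen_preimage _ (isOpen_discrete _)

lemma continuous_bot_of_preimages {K : Type*} {f : G → K}
    (h : ∀ σ : K, IsOpen (f ⁻¹' {σ})) : @Continuous G K _ ⊥ f := by
  refine continuous_def.mpr fun U _ => ?_
  have hU : f ⁻¹' U = ⋃ σ ∈ U, f ⁻¹' {σ} := by ext x; simp
  rw [hU]
  exact isOpen_biUnion fun σ _ => h σ

lemma continuous_bot_comp {K L : Type*} (f : K → L) {g : G → K}
    (hg : @Continuous G K _ ⊥ g) : @Continuous G L _ ⊥ (f ∘ g) :=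
  @Continuous.comp G K L _ ⊥ ⊥ g f continuous_bot hg

def permCongrHom {X Y : Type*} (e : X ≃ Y) : Equiv.Perm X →* Equiv.Perm Y where
  toFun := e.permCongr
  map_one' := e.permCongr_refl
  map_mul' := fun σ τ => by
    simp only [Equiv.Perm.mul_def, Equiv.permCongr_trans]

@[simp] lemma permCongrHom_apply {X Y : Type*} (e : X ≃ Y) (σ : Equiv.Perm X) (y : Y) :
    permCongrHom e σ y = e (σ (e.symm y)) := rfl

def chomCongr {X Y : Type*} (e : X ≃ Y) : CHom G X ≃ CHom G Y where
  toFun φ := ⟨(permCongrHom e).comp φ.1, continuous_bot_comp (⇑(permCongrHom e)) φ.2⟩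
  invFun ψ := ⟨(permCongrHom e.symm).comp ψ.1, continuous_bot_comp (⇑(permCongrHom e.symm)) ψ.2⟩
  left_inv φ := by apply Subtype.ext; ext g x; simp
  right_inv ψ := by apply Subtype.ext; ext g x; simp

variable (G) in
/-- Open subgroups of index between 1 and `m+1`. -/
def OS (m : ℕ) : Type _ :=
  {H : Subgroup G // IsOpen (H : Set G) ∧ H.index ∈ Finset.Icc 1 (m + 1)}

/-- Pointed embeddings of `G ⧸ H` into `Fin (m+1)`. -/
def PJ (H : Subgroup G) (m : ℕ) : Type _ :=
  {j : (G ⧸ H) ↪ Fin (m + 1) // j ((1 : G) : G ⧸ H) = 0}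

variable (G) in
def Tot (m : ℕ) : Type _ :=
  Σ (H : OS G m), Σ (j : PJ H.1 m), CHom G ↥((Set.range ⇑j.1)ᶜ)

section Backward
variable [IsTopologicalGroup G]

lemma isOpen_smul_eq {H : Subgroup G} (hH : IsOpen (H : Set G)) (x y : G ⧸ H) :
    IsOpen {g : G | g • x = y} := by
  obtain ⟨a, rfl⟩ := QuotientGroup.mk_surjective x
  obtain ⟨b, rfl⟩ := QuotientGroup.mk_surjective y
  have hset : {g : G | g • (↑a : G ⧸ H) = ↑b} = (fun g : G => (g * a)⁻¹ * b) ⁻¹' (H : Set G) := by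
    ext g
    have : g • (↑a : G ⧸ H) = ↑(g * a) := rfl
    simp [this, QuotientGroup.eq, Set.mem_preimage, SetLike.mem_coe]
  rw [hset]
  exact hH.preimage (((continuous_mul_right a).inv).mul continuous_const)

variable {m : ℕ}

/-- The underlying equivalence used in the backward map. -/
noncomputable def bEquiv {H : Subgroup G} (j : PJ H m) :
    ((G ⧸ H) ⊕ ↥((Set.range ⇑j.1)ᶜ)) ≃ Fin (m + 1) := by
  classical
  exact (Equiv.sumCongr (Equiv.ofInjective ⇑j.1 j.1.injective) (Equiv.refl _)).trans
    (Equiv.Set.sumCompl (Set.range ⇑j.1))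

/-- The backward map: build a continuous hom `G →* Perm (Fin (m+1))` from the data. -/
noncomputable def Bhom (H : OS G m) (j : PJ H.1 m) (ψ : CHom G ↥((Set.range ⇑j.1)ᶜ)) :
    G →* Equiv.Perm (Fin (m + 1)) :=
  (permCongrHom (bEquiv j)).comp
    ((Equiv.Perm.sumCongrHom _ _).comp
      ((MulAction.toPermHom G (G ⧸ H.1)).prod ψ.1))

lemma Bhom_apply_mem (H : OS G m) (j : PJ H.1 m) (ψ : CHom G ↥((Set.range ⇑j.1)ᶜ))
    (g : G) (q : G ⧸ H.1) : Bhom H j ψ g (j.1 q) = j.1 (g • q) := by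
  classical
  have h1 : (bEquiv j).symm (j.1 q) = Sum.inl q := by
    simp only [bEquiv, Equiv.symm_trans_apply]
    rw [Equiv.Set.sumCompl_symm_apply_of_mem (Set.mem_range_self q)]
    simp only [Equiv.sumCongr_symm, Equiv.sumCongr_apply, Equiv.refl_symm, Sum.map_inl]
    exact congrArg Sum.inl (Equiv.ofInjective_symm_apply j.1.injective q)
  simp only [Bhom, MonoidHom.comp_apply, permCongrHom_apply, h1]
  simp only [Equiv.Perm.sumCongrHom_apply, MonoidHom.prod_apply, Equiv.sumCongr_apply,
    Sum.map_inl]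
  simp only [bEquiv, Equiv.trans_apply, Equiv.sumCongr_apply, Sum.map_inl,
    Equiv.Set.sumCompl_apply_inl]
  rfl

lemma Bhom_apply_not_mem (H : OS G m) (j : PJ H.1 m) (ψ : CHom G ↥((Set.range ⇑j.1)ᶜ))
    (g : G) (x : Fin (m + 1)) (hx : x ∈ (Set.range ⇑j.1)ᶜ) :
    Bhom H j ψ g x = ↑(ψ.1 g ⟨x, hx⟩) := by
  classical
  have h1 : (bEquiv j).symm x = Sum.inr ⟨x, hx⟩ := by
    simp only [bEquiv, Equiv.symm_trans_apply]
    rw [Equiv.Set.sumCompl_symm_apply_of_notMem hx]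
    rfl
  simp only [Bhom, MonoidHom.comp_apply, permCongrHom_apply, h1]
  simp only [Equiv.Perm.sumCongrHom_apply, MonoidHom.prod_apply, Equiv.sumCongr_apply,
    Sum.map_inr]
  simp only [bEquiv, Equiv.trans_apply, Equiv.sumCongr_apply, Sum.map_inr,
    Equiv.Set.sumCompl_apply_inr]
  rfl


lemma Bhom_continuous (H : OS G m) (j : PJ H.1 m) (ψ : CHom G ↥((Set.range ⇑j.1)ᶜ)) :
    @Continuous G (Equiv.Perm (Fin (m + 1))) _ ⊥ ⇑(Bhom H j ψ) := by
  haveI : Finite (G ⧸ H.1) := by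
    have h0 : H.1.index ≠ 0 := by
      have := (Finset.mem_Icc.mp H.2.2).1; omega
    rw [Subgroup.index] at h0
    exact Nat.finite_of_card_ne_zero h0
  apply continuous_bot_of_preimages
  intro σ
  by_cases hσ : ∃ g₀ : G, Bhom H j ψ g₀ = σ
  · obtain ⟨g₀, rfl⟩ := hσ
    have key : ⇑(Bhom H j ψ) ⁻¹' {Bhom H j ψ g₀}
        = (⋂ x : G ⧸ H.1, {g : G | g • x = g₀ • x}) ∩ (⇑ψ.1 ⁻¹' {ψ.1 g₀}) := by
      ext g
      simp only [Set.mem_preimage, Set.mem_singleton_iff, Set.mem_inter_iff, Set.mem_iInter,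
        Set.mem_setOf_eq]
      constructor
      · intro h
        refine ⟨fun x => ?_, ?_⟩
        · apply j.1.injective
          rw [← Bhom_apply_mem H j ψ g x, ← Bhom_apply_mem H j ψ g₀ x, h]
        · refine Equiv.ext fun x => Subtype.ext ?_
          have h1 := Bhom_apply_not_mem H j ψ g x.1 x.2
          have h2 := Bhom_apply_not_mem H j ψ g₀ x.1 x.2
          rw [h] at h1
          exact h1.symm.trans h2
      · rintro ⟨h1, h2⟩
        refine Equiv.ext fun x => ?_
        by_cases hx : x ∈ Set.range ⇑j.1
        · obtain ⟨q, rfl⟩ := hx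
          rw [Bhom_apply_mem, Bhom_apply_mem, h1 q]
        · rw [Bhom_apply_not_mem H j ψ g x hx, Bhom_apply_not_mem H j ψ g₀ x hx, h2]
    rw [key]
    exact IsOpen.inter (isOpen_iInter_of_finite fun x => isOpen_smul_eq H.2.1 x (g₀ • x))
      (isOpen_preimage_bot ψ.2 _)
  · have hempty : ⇑(Bhom H j ψ) ⁻¹' {σ} = ∅ := by
      ext g
      simp only [Set.mem_preimage, Set.mem_singleton_iff, Set.mem_empty_iff_false, iff_false]
      exact fun h => hσ ⟨g, h⟩
    rw [hempty]
    exact isOpen_empty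

variable (G) in
/-- The backward map of the main bijection. -/
noncomputable def B {m : ℕ} (t : Tot G m) : CHom G (Fin (m + 1)) :=
  ⟨Bhom t.1 t.2.1 t.2.2, Bhom_continuous t.1 t.2.1 t.2.2⟩

end Backward

section Forward
variable {m : ℕ}

/-- The stabilizer of `0` under a hom to `Perm (Fin (m+1))`. -/
def FH (φ : G →* Equiv.Perm (Fin (m + 1))) : Subgroup G :=
  Subgroup.comap φ (MulAction.stabilizer (Equiv.Perm (Fin (m + 1))) (0 : Fin (m + 1)))

lemma mem_FH {φ : G →* Equiv.Perm (Fin (m + 1))} {g : G} :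
    g ∈ FH φ ↔ φ g 0 = 0 := by
  simp [FH, MulAction.mem_stabilizer_iff, Equiv.Perm.smul_def]

lemma Fjsound (φ : G →* Equiv.Perm (Fin (m + 1))) (a b : G)
    (h : @Setoid.r _ (QuotientGroup.leftRel (FH φ)) a b) : φ a 0 = φ b 0 := by
  have h' : φ (a⁻¹ * b) 0 = 0 := mem_FH.mp (QuotientGroup.leftRel_apply.mp h)
  calc φ a 0 = φ a (φ (a⁻¹ * b) 0) := by rw [h']
  _ = φ (a * (a⁻¹ * b)) 0 := by rw [map_mul φ a (a⁻¹ * b), Equiv.Perm.mul_apply]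
  _ = φ b 0 := by rw [mul_inv_cancel_left]

def Fjfun (φ : G →* Equiv.Perm (Fin (m + 1))) : G ⧸ FH φ → Fin (m + 1) :=
  fun q => Quotient.liftOn' q (fun g => φ g 0) (Fjsound φ)

lemma Fjfun_mk (φ : G →* Equiv.Perm (Fin (m + 1))) (g : G) :
    Fjfun φ (↑g : G ⧸ FH φ) = φ g 0 := rfl

lemma Fjfun_injective (φ : G →* Equiv.Perm (Fin (m + 1))) : Function.Injective (Fjfun φ) := by
  intro q₁ q₂
  refine Quotient.inductionOn₂' q₁ q₂ fun a b h => ?_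
  have h' : φ a 0 = φ b 0 := h
  apply Quotient.sound'
  rw [QuotientGroup.leftRel_apply]
  apply mem_FH.mpr
  rw [map_mul, map_inv]
  show (φ a)⁻¹ (φ b 0) = 0
  rw [← h']
  exact Equiv.symm_apply_apply _ _

def Fj (φ : G →* Equiv.Perm (Fin (m + 1))) : PJ (FH φ) m :=
  ⟨⟨Fjfun φ, Fjfun_injective φ⟩, by
    show φ 1 0 = 0
    rw [map_one]; rfl⟩

lemma Fmem (φ : G →* Equiv.Perm (Fin (m + 1))) (g : G) (x : Fin (m + 1)) :
    φ g x ∈ Set.range (Fjfun φ) ↔ x ∈ Set.range (Fjfun φ) := by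
  constructor
  · rintro ⟨q, hq⟩
    obtain ⟨a, rfl⟩ := QuotientGroup.mk_surjective q
    rw [Fjfun_mk] at hq
    refine ⟨((g⁻¹ * a : G) : G ⧸ FH φ), ?_⟩
    rw [Fjfun_mk, map_mul, map_inv]
    show (φ g)⁻¹ (φ a 0) = x
    rw [hq]
    exact Equiv.symm_apply_apply _ _
  · rintro ⟨q, hq⟩
    obtain ⟨a, rfl⟩ := QuotientGroup.mk_surjective q
    rw [Fjfun_mk] at hq
    refine ⟨((g * a : G) : G ⧸ FH φ), ?_⟩
    rw [Fjfun_mk, map_mul]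
    show φ g (φ a 0) = φ g x
    rw [hq]

lemma Fswap (φ : G →* Equiv.Perm (Fin (m + 1))) (g : G) (x : Fin (m + 1)) :
    x ∈ (Set.range (Fjfun φ))ᶜ ↔ φ g x ∈ (Set.range (Fjfun φ))ᶜ := by
  simp only [Set.mem_compl_iff]
  exact not_congr (Fmem φ g x).symm

def Fψhom (φ : G →* Equiv.Perm (Fin (m + 1))) :
    G →* Equiv.Perm ↥((Set.range (Fjfun φ))ᶜ) where
  toFun g := (φ g).subtypePerm (fun x => (Fswap φ g x).symm)
  map_one' := Equiv.ext fun x => Subtype.ext (by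
    simp [Equiv.Perm.subtypePerm_apply, map_one])
  map_mul' g g' := Equiv.ext fun x => Subtype.ext (by
    show φ (g * g') x.1 = φ g (φ g' x.1)
    rw [map_mul]; rfl)

lemma Fψ_continuous (φC : CHom G (Fin (m + 1))) :
    @Continuous G (Equiv.Perm ↥((Set.range (Fjfun φC.1))ᶜ)) _ ⊥ ⇑(Fψhom φC.1) := by
  classical
  have hfun : ⇑(Fψhom φC.1) =
      (fun σ : Equiv.Perm (Fin (m + 1)) =>
        if h : ∀ x : Fin (m + 1), x ∈ (Set.range (Fjfun φC.1))ᶜ ↔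
            σ x ∈ (Set.range (Fjfun φC.1))ᶜ then σ.subtypePerm (fun x => (h x).symm) else 1) ∘ ⇑φC.1 := by
    funext g
    show (φC.1 g).subtypePerm (fun x => (Fswap φC.1 g x).symm) = _
    rw [Function.comp_apply, dif_pos (Fswap φC.1 g)]
  rw [hfun]
  exact continuous_bot_comp _ φC.2

lemma FH_isOpen (φC : CHom G (Fin (m + 1))) : IsOpen ((FH φC.1 : Subgroup G) : Set G) := by
  have hset : ((FH φC.1 : Subgroup G) : Set G)
      = ⇑φC.1 ⁻¹' {σ : Equiv.Perm (Fin (m + 1)) | σ 0 = 0} := by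
    ext g
    simp [SetLike.mem_coe, mem_FH]
  rw [hset]
  exact isOpen_preimage_bot φC.2 _

lemma FH_index_mem (φC : CHom G (Fin (m + 1))) :
    (FH φC.1).index ∈ Finset.Icc 1 (m + 1) := by
  haveI : Finite (G ⧸ FH φC.1) := Finite.of_injective _ (Fjfun_injective φC.1)
  have hcard : (FH φC.1).index = Nat.card (G ⧸ FH φC.1) := rfl
  rw [Finset.mem_Icc, hcard]
  constructor
  · exact Nat.one_le_iff_ne_zero.mpr Nat.card_pos.ne'
  · have := Nat.card_le_card_of_injective _ (Fjfun_injective φC.1)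
    simpa using this

variable (G) in
/-- The forward map of the main bijection. -/
noncomputable def F {m : ℕ} (φC : CHom G (Fin (m + 1))) : Tot G m :=
  ⟨⟨FH φC.1, FH_isOpen φC, FH_index_mem φC⟩, Fj φC.1, ⟨Fψhom φC.1, Fψ_continuous φC⟩⟩

end Forward

section Roundtrip
variable [IsTopologicalGroup G] {m : ℕ}

lemma B_F (φC : CHom G (Fin (m + 1))) : B G (F G φC) = φC := by
  apply Subtype.ext
  refine MonoidHom.ext fun g => Equiv.ext fun x => ?_
  show Bhom (F G φC).1 (F G φC).2.1 (F G φC).2.2 g x = φC.1 g x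
  by_cases hx : x ∈ Set.range (Fjfun φC.1)
  · obtain ⟨q, rfl⟩ := hx
    obtain ⟨a, rfl⟩ := QuotientGroup.mk_surjective q
    refine Eq.trans (Bhom_apply_mem (F G φC).1 (F G φC).2.1 (F G φC).2.2 g (↑a)) ?_
    show Fjfun φC.1 (g • ((a : G) : G ⧸ FH φC.1)) = φC.1 g (Fjfun φC.1 (↑a))
    have h2 : g • ((a : G) : G ⧸ FH φC.1) = ((g * a : G) : G ⧸ FH φC.1) := rfl
    rw [h2, Fjfun_mk, Fjfun_mk, map_mul, Equiv.Perm.mul_apply]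
  · have h1 := Bhom_apply_not_mem (F G φC).1 (F G φC).2.1 (F G φC).2.2 g x hx
    rw [h1]
    rfl

lemma Bhom_zero_iff (H : OS G m) (j : PJ H.1 m) (ψ : CHom G ↥((Set.range ⇑j.1)ᶜ)) (g : G) :
    Bhom H j ψ g (0 : Fin (m + 1)) = 0 ↔ g ∈ H.1 := by
  have h1 : Bhom H j ψ g (0 : Fin (m + 1)) = j.1 ((g : G ⧸ H.1)) := by
    conv_lhs => rw [← j.2]
    rw [Bhom_apply_mem]
    congr 1
    show g • ((1 : G) : G ⧸ H.1) = ((g : G) : G ⧸ H.1)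
    have h2 : g • ((1 : G) : G ⧸ H.1) = ((g * 1 : G) : G ⧸ H.1) := rfl
    rw [h2, mul_one]
  rw [h1]
  have key : ((g : G ⧸ H.1)) = ((1 : G) : G ⧸ H.1) ↔ g ∈ H.1 := by
    rw [QuotientGroup.eq]
    simp [mul_one, inv_mem_iff]
  constructor
  · intro h
    exact key.mp (j.1.injective (h.trans j.2.symm))
  · intro h
    rw [show ((g : G ⧸ H.1)) = ((1 : G) : G ⧸ H.1) from key.mpr h]
    exact j.2

lemma B_injective : Function.Injective (B G (m := m)) := by
  rintro ⟨⟨H, hH⟩, ⟨j, hj⟩, ψ⟩ ⟨⟨H', hH'⟩, ⟨j', hj'⟩, ψ'⟩ heq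
  have happ : ∀ (g : G) (x : Fin (m + 1)),
      Bhom ⟨H, hH⟩ ⟨j, hj⟩ ψ g x = Bhom ⟨H', hH'⟩ ⟨j', hj'⟩ ψ' g x := by
    intro g x
    have h0 : Bhom (⟨H, hH⟩ : OS G m) ⟨j, hj⟩ ψ = Bhom ⟨H', hH'⟩ ⟨j', hj'⟩ ψ' :=
      congrArg Subtype.val heq
    rw [h0]
  have hHeq : H = H' := by
    ext g
    rw [← Bhom_zero_iff ⟨H, hH⟩ ⟨j, hj⟩ ψ g, happ g 0]
    exact Bhom_zero_iff _ _ _ _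
  subst hHeq
  have hjeq : j = j' := by
    apply Function.Embedding.ext
    intro q
    obtain ⟨a, rfl⟩ := QuotientGroup.mk_surjective q
    have hmk : ∀ (jj : (G ⧸ H) ↪ Fin (m + 1)) (hjj : jj ((1 : G) : G ⧸ H) = 0)
        (ψψ : CHom G ↥((Set.range ⇑jj)ᶜ)),
        Bhom (⟨H, hH⟩ : OS G m) ⟨jj, hjj⟩ ψψ a 0 = jj ((a : G) : G ⧸ H) := by
      intro jj hjj ψψ
      have h4 := Bhom_apply_mem (⟨H, hH⟩ : OS G m) ⟨jj, hjj⟩ ψψ a ((1 : G) : G ⧸ H)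
      calc Bhom (⟨H, hH⟩ : OS G m) ⟨jj, hjj⟩ ψψ a 0
          = Bhom (⟨H, hH⟩ : OS G m) ⟨jj, hjj⟩ ψψ a (jj ((1 : G) : G ⧸ H)) := by rw [hjj]
      _ = jj (a • ((1 : G) : G ⧸ H)) := h4
      _ = jj ((a : G) : G ⧸ H) := by
          congr 1
          have h2 : a • ((1 : G) : G ⧸ H) = ((a * 1 : G) : G ⧸ H) := rfl
          rw [h2, mul_one]
    rw [← hmk j hj ψ, ← hmk j' hj' ψ', happ a 0]
  subst hjeq
  have hψeq : ψ = ψ' := by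
    apply Subtype.ext
    refine MonoidHom.ext fun g => Equiv.ext fun x => Subtype.ext ?_
    have e1 := Bhom_apply_not_mem (⟨H, hH⟩ : OS G m) ⟨j, hj⟩ ψ g x.1 x.2
    have e2 := Bhom_apply_not_mem (⟨H, hH'⟩ : OS G m) ⟨j, hj'⟩ ψ' g x.1 x.2
    have e3 := happ g x.1
    rw [e1, e2] at e3
    exact e3
  subst hψeq
  rfl

variable (G) in
/-- The main bijection. -/
noncomputable def mainEquiv (m : ℕ) : CHom G (Fin (m + 1)) ≃ Tot G m :=
  (Equiv.ofBijective (B G) ⟨B_injective, fun φC => ⟨F G φC, B_F φC⟩⟩).symm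

end Roundtrip

section Counting
variable [IsTopologicalGroup G] {m : ℕ}

lemma card_chom_congr {X Y : Type*} (e : X ≃ Y) : Nat.card (CHom G X) = Nat.card (CHom G Y) :=
  Nat.card_congr (chomCongr e)

lemma OS.finite_quot (H : OS G m) : Finite (G ⧸ H.1) := by
  have h0 : H.1.index ≠ 0 := by
    have := (Finset.mem_Icc.mp H.2.2).1; omega
  rw [Subgroup.index] at h0
  exact Nat.finite_of_card_ne_zero h0

lemma finite_PJ (H : OS G m) : Finite (PJ H.1 m) := by
  haveI := OS.finite_quot H
  exact Finite.of_injective (fun j : PJ H.1 m => (⇑j.1 : G ⧸ H.1 → Fin (m + 1)))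
    fun a b hab => Subtype.ext (Function.Embedding.ext fun q => congrFun hab q)

lemma card_compl_range (H : OS G m) (j : PJ H.1 m) :
    Nat.card ↥((Set.range ⇑j.1)ᶜ) = m + 1 - H.1.index := by
  haveI := OS.finite_quot H
  have hs : (Set.range ⇑j.1).Finite := Set.toFinite _
  have hsc : ((Set.range ⇑j.1)ᶜ).Finite := Set.toFinite _
  have hadd := Set.ncard_add_ncard_compl (Set.range ⇑j.1) hs hsc
  have hk : (Set.range ⇑j.1).ncard = H.1.index := by
    rw [← Nat.card_coe_set_eq, Nat.card_range_of_injective j.1.injective]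
    rfl
  have hc : Nat.card (Fin (m + 1)) = m + 1 := by simp
  rw [Nat.card_coe_set_eq]
  rw [hk, hc] at hadd
  have hle := (Finset.mem_Icc.mp H.2.2).2
  omega

/-- Bijection of the complement with a standard `Fin`. -/
noncomputable def complEquiv (H : OS G m) (j : PJ H.1 m) :
    ↥((Set.range ⇑j.1)ᶜ) ≃ Fin (m + 1 - H.1.index) :=
  Finite.equivFinOfCardEq (card_compl_range H j)

/-- Pointed embeddings are equivalent to embeddings of the complements of the base points. -/
noncomputable def pjEquiv (H : Subgroup G) (m : ℕ) :
    PJ H m ≃ ({q : G ⧸ H // q ≠ ((1 : G) : G ⧸ H)} ↪ {x : Fin (m + 1) // x ≠ 0}) :=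
  letI : DecidableEq (G ⧸ H) := Classical.decEq _
  { toFun := fun j =>
      ⟨fun q => ⟨j.1 q.1, fun h => q.2 (j.1.injective (h.trans j.2.symm))⟩,
        fun a b hab => Subtype.ext (j.1.injective (congrArg Subtype.val hab))⟩
    invFun := fun f =>
      ⟨⟨fun q => if h : q = ((1 : G) : G ⧸ H) then 0 else (f ⟨q, h⟩).1, by
        intro a b hab
        dsimp only at hab
        by_cases ha : a = ((1 : G) : G ⧸ H) <;> by_cases hb : b = ((1 : G) : G ⧸ H)
        · rw [ha, hb]
        · rw [dif_pos ha, dif_neg hb] at hab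
          exact absurd hab.symm (f ⟨b, hb⟩).2
        · rw [dif_neg ha, dif_pos hb] at hab
          exact absurd hab (f ⟨a, ha⟩).2
        · rw [dif_neg ha, dif_neg hb] at hab
          have := f.injective (Subtype.ext hab)
          exact congrArg Subtype.val this⟩, by simp⟩
    left_inv := fun j => by
      apply Subtype.ext
      apply Function.Embedding.ext
      intro q
      simp only [Function.Embedding.coeFn_mk]
      by_cases h : q = ((1 : G) : G ⧸ H)
      · rw [dif_pos h, h, j.2]
      · rw [dif_neg h]
        rfl
    right_inv := fun f => by
      apply Function.Embedding.ext
      intro q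
      apply Subtype.ext
      simp only [Function.Embedding.coeFn_mk]
      show (if h : q.1 = ((1 : G) : G ⧸ H) then 0 else (f ⟨q.1, h⟩).1) = (f q).1
      rw [dif_neg q.2] }

lemma card_PJ (H : OS G m) :
    Nat.card (PJ H.1 m) = m.descFactorial (H.1.index - 1) := by
  classical
  haveI := OS.finite_quot H
  haveI : Fintype (G ⧸ H.1) := Fintype.ofFinite _
  rw [Nat.card_congr (pjEquiv H.1 m), Nat.card_eq_fintype_card, Fintype.card_embedding_eq]
  have h1 : Fintype.card {x : Fin (m + 1) // x ≠ 0} = m := by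
    show Fintype.card {x : Fin (m + 1) // ¬(x = 0)} = m
    rw [Fintype.card_subtype_compl, Fintype.card_subtype_eq, Fintype.card_fin]
    omega
  have h2 : Fintype.card {q : G ⧸ H.1 // q ≠ ((1 : G) : G ⧸ H.1)} = H.1.index - 1 := by
    show Fintype.card {q : G ⧸ H.1 // ¬(q = ((1 : G) : G ⧸ H.1))} = H.1.index - 1
    rw [Fintype.card_subtype_compl, Fintype.card_subtype_eq]
    rw [Subgroup.index, Nat.card_eq_fintype_card]
  rw [h1, h2]

lemma nat_card_sigma {ι : Type*} [Fintype ι] (α : ι → Type*) [∀ i, Finite (α i)] :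
    Nat.card (Σ i, α i) = ∑ i, Nat.card (α i) := by
  haveI := fun i => Fintype.ofFinite (α i)
  simp [Nat.card_eq_fintype_card]

lemma count_eq
    (hfin_t : ∀ n : ℕ,
      Finite {φ : G →* Equiv.Perm (Fin n) // @Continuous G (Equiv.Perm (Fin n)) _ ⊥ ⇑φ})
    (hfin_M : ∀ n : ℕ, 0 < n → Finite {H : Subgroup G // IsOpen (H : Set G) ∧ H.index = n})
    (m : ℕ) :
    contHomCount G (m + 1) = ∑ k ∈ Finset.Icc 1 (m + 1),
      m.descFactorial (k - 1) * openSubgroupCount G k * contHomCount G (m + 1 - k) := by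
  classical
  haveI hT : ∀ k : ℕ, Finite (CHom G (Fin k)) := hfin_t
  haveI hOS : Finite (OS G m) := by
    have hset : {H : Subgroup G | IsOpen (H : Set G) ∧ H.index ∈ Finset.Icc 1 (m + 1)}.Finite := by
      have hU : {H : Subgroup G | IsOpen (H : Set G) ∧ H.index ∈ Finset.Icc 1 (m + 1)}
          = ⋃ k ∈ Finset.Icc 1 (m + 1), {H : Subgroup G | IsOpen (H : Set G) ∧ H.index = k} := by
        ext H
        simp only [Set.mem_setOf_eq, Set.mem_iUnion]
        constructor
        · rintro ⟨h1, h2⟩; exact ⟨H.index, h2, h1, rfl⟩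
        · rintro ⟨k, hk, h1, rfl⟩; exact ⟨h1, hk⟩
      rw [hU]
      refine Set.Finite.biUnion (Finset.finite_toSet _) fun k hk => ?_
      have hkpos : 0 < k := (Finset.mem_Icc.mp hk).1
      haveI := hfin_M k hkpos
      exact Set.finite_coe_iff.mp
        ‹Finite {H : Subgroup G // IsOpen (H : Set G) ∧ H.index = k}›
    exact hset.to_subtype
  haveI : Fintype (OS G m) := Fintype.ofFinite _
  haveI hPJ : ∀ H : OS G m, Finite (PJ H.1 m) := finite_PJ
  haveI hC : ∀ (H : OS G m) (j : PJ H.1 m), Finite (CHom G ↥((Set.range ⇑j.1)ᶜ)) :=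
    fun H j => Finite.of_equiv _ (chomCongr (complEquiv H j)).symm
  haveI hPJF : ∀ H : OS G m, Fintype (PJ H.1 m) := fun H => Fintype.ofFinite _
  have step1 : contHomCount G (m + 1) = Nat.card (Tot G m) := Nat.card_congr (mainEquiv G m)
  rw [step1]
  rw [show Nat.card (Tot G m)
      = ∑ H : OS G m, Nat.card (Σ j : PJ H.1 m, CHom G ↥((Set.range ⇑j.1)ᶜ)) from
    nat_card_sigma _]
  have hterm : ∀ H : OS G m, Nat.card (Σ j : PJ H.1 m, CHom G ↥((Set.range ⇑j.1)ᶜ))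
      = m.descFactorial (H.1.index - 1) * contHomCount G (m + 1 - H.1.index) := by
    intro H
    rw [nat_card_sigma]
    have hj : ∀ j : PJ H.1 m, Nat.card (CHom G ↥((Set.range ⇑j.1)ᶜ))
        = contHomCount G (m + 1 - H.1.index) := fun j => card_chom_congr (complEquiv H j)
    rw [Finset.sum_congr rfl fun j _ => hj j, Finset.sum_const, smul_eq_mul,
      Finset.card_univ, ← Nat.card_eq_fintype_card, card_PJ]
  rw [Finset.sum_congr rfl fun H _ => hterm H]
  rw [← Finset.sum_fiberwise_of_maps_to (g := fun H : OS G m => H.1.index)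
    (t := Finset.Icc 1 (m + 1)) (fun H _ => H.2.2)
    (fun H : OS G m => m.descFactorial (H.1.index - 1) * contHomCount G (m + 1 - H.1.index))]
  refine Finset.sum_congr rfl fun k hk => ?_
  have hconst : ∀ H ∈ Finset.univ.filter (fun H : OS G m => H.1.index = k),
      m.descFactorial (H.1.index - 1) * contHomCount G (m + 1 - H.1.index)
        = m.descFactorial (k - 1) * contHomCount G (m + 1 - k) := by
    intro H hH
    rw [(Finset.mem_filter.mp hH).2]
  rw [Finset.sum_congr rfl hconst, Finset.sum_const, smul_eq_mul]
  have hcard : (Finset.univ.filter (fun H : OS G m => H.1.index = k)).card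
      = openSubgroupCount G k := by
    rw [← Fintype.card_subtype, ← Nat.card_eq_fintype_card]
    apply Nat.card_congr
    exact
      { toFun := fun H => ⟨H.1.1, H.1.2.1, H.2⟩
        invFun := fun H => ⟨⟨H.1, H.2.1, by rw [H.2.2]; exact hk⟩, H.2.2⟩
        left_inv := fun H => Subtype.ext (Subtype.ext rfl)
        right_inv := fun H => rfl }
  rw [hcard]
  ring

end Counting
end Wohlfahrt


/-- Wohlfahrt's recurrence.  For every positive integer `n`,
`t_n = (n-1)! · ∑_{k=1}^{n} t_{n-k} · M_k / (n-k)!`, where `t_m` is the number of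
continuous homomorphisms `G → S_m` (with `t_0 = 1`) and `M_k` the number of open
subgroups of `G` of index `k`. -/
theorem wohlfahrt_recurrence (G : Type*) [Group G] [TopologicalSpace G]
    [IsTopologicalGroup G]
    (hfin_t : ∀ n : ℕ,
      Finite {φ : G →* Equiv.Perm (Fin n) // @Continuous G (Equiv.Perm (Fin n)) _ ⊥ ⇑φ})
    (hfin_M : ∀ n : ℕ, 0 < n → Finite {H : Subgroup G // IsOpen (H : Set G) ∧ H.index = n})
    (n : ℕ) (hn : 0 < n) :
    (contHomCount G n : ℚ) =
      ((n - 1).factorial : ℚ) *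
        ∑ k ∈ Finset.Icc 1 n,
          (contHomCount G (n - k) : ℚ) * (openSubgroupCount G k : ℚ) /
            ((n - k).factorial : ℚ) := by
  classical
  obtain ⟨m, rfl⟩ : ∃ m, n = m + 1 := ⟨n - 1, by omega⟩
  have hkey := Wohlfahrt.count_eq hfin_t hfin_M m
  rw [hkey]
  push_cast
  rw [Finset.mul_sum]
  refine Finset.sum_congr rfl fun k hk => ?_
  obtain ⟨hk1, hk2⟩ := Finset.mem_Icc.mp hk
  have hfac : (m + 1 - k).factorial * m.descFactorial (k - 1) = m.factorial := by
    have h3 : m - (k - 1) = m + 1 - k := by omega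
    have h4 := Nat.factorial_mul_descFactorial (n := m) (k := k - 1) (by omega)
    rw [h3] at h4
    exact h4
  have hne : ((m + 1 - k).factorial : ℚ) ≠ 0 := Nat.cast_ne_zero.mpr (Nat.factorial_ne_zero _)
  have hfacQ : ((m + 1 - k).factorial : ℚ) * (m.descFactorial (k - 1) : ℚ)
      = (m.factorial : ℚ) := by exact_mod_cast hfac
  field_simp
  linear_combination ((openSubgroupCount G k : ℚ) * (contHomCount G (m + 1 - k) : ℚ)) * hfacQ
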